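/- (Symmetry-Preserving, Lemma 5) Let σ be a permutation of Fin n, acting on vectors by (σ • y)_i = y_{σ⁻¹(i)}. Suppose f(σ • y) = f(y) for all y, σ • x = x, σ • x' = x', and σ maps the subset I₁ ⊆ Fin n bijectively onto the subset I₂ ⊆ Fin n. Then the IDG-Vis set attributions satisfy a(I₁) = a(I₂). -/

import Mathlib

open scoped RealInnerProductSpace
open MeasureTheory

/-- Direction vector `a_T`: coordinatewise `x_i - x'_i` on `T`, `0` elsewhere. -/
noncomputable def dirVec {n : ℕ} (x x' : EuclideanSpace ℝ (Fin n)) (T : Finset (Fin n)) :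
    EuclideanSpace ℝ (Fin n) :=
  WithLp.toLp 2 fun i => if i ∈ T then x i - x' i else 0

/-- Unit direction `â_T = a_T / ‖a_T‖` if `a_T ≠ 0`, else `0`. -/
noncomputable def unitDir {n : ℕ} (x x' : EuclideanSpace ℝ (Fin n)) (T : Finset (Fin n)) :
    EuclideanSpace ℝ (Fin n) :=
  letI := Classical.dec (dirVec x x' T = 0)
  if dirVec x x' T = 0 then 0 else ‖dirVec x x' T‖⁻¹ • dirVec x x' T

/-- Directional gradient `∇_T f(y) = |⟪∇f(y), â_T⟫|`. -/
noncomputable def dirGrad {n : ℕ} (f : EuclideanSpace ℝ (Fin n) → ℝ)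
    (x x' : EuclideanSpace ℝ (Fin n)) (T : Finset (Fin n))
    (y : EuclideanSpace ℝ (Fin n)) : ℝ :=
  |⟪gradient f y, unitDir x x' T⟫|

/-- IDG-Vis score: `∫₀¹ ∇_T f(x' + α (x - x')) dα`. -/
noncomputable def IDGVis {n : ℕ} (f : EuclideanSpace ℝ (Fin n) → ℝ)
    (x x' : EuclideanSpace ℝ (Fin n)) (T : Finset (Fin n)) : ℝ :=
  ∫ α in (0:ℝ)..1, dirGrad f x x' T (x' + α • (x - x'))

/-- Set attribution `a(I) = Σ_{T ⊆ I} IDGVis(T)`. -/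
noncomputable def setAttr {n : ℕ} (f : EuclideanSpace ℝ (Fin n) → ℝ)
    (x x' : EuclideanSpace ℝ (Fin n)) (I : Finset (Fin n)) : ℝ :=
  ∑ T ∈ I.powerset, IDGVis f x x' T


section aux
variable {n : ℕ} (σ : Equiv.Perm (Fin n))

noncomputable def permIso {n : ℕ} (σ : Equiv.Perm (Fin n)) :
    EuclideanSpace ℝ (Fin n) ≃ₗᵢ[ℝ] EuclideanSpace ℝ (Fin n) :=
  LinearIsometryEquiv.piLpCongrLeft 2 ℝ ℝ σ

lemma permIso_apply (v : EuclideanSpace ℝ (Fin n)) :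
    permIso σ v = (WithLp.toLp 2 (fun i => v (σ⁻¹ i)) : EuclideanSpace ℝ (Fin n)) := by
  ext i
  simp [permIso, LinearIsometryEquiv.piLpCongrLeft_apply, Equiv.piCongrLeft']

lemma inner_grad_perm (f : EuclideanSpace ℝ (Fin n) → ℝ) (hf : ContDiff ℝ 1 f)
    (hfσ : ∀ y : EuclideanSpace ℝ (Fin n),
        f (WithLp.toLp 2 (fun i => y (σ⁻¹ i)) : EuclideanSpace ℝ (Fin n)) = f y)
    (y v : EuclideanSpace ℝ (Fin n)) (hy : permIso σ y = y) :
    ⟪gradient f y, permIso σ v⟫ = ⟪gradient f y, v⟫ := by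
  have hdf : Differentiable ℝ f := hf.differentiable one_ne_zero
  have hcomp : f ∘ (permIso σ) = f := by
    funext z; simp [Function.comp, permIso_apply, hfσ]; exact hfσ z
  have h1 : HasFDerivAt (f ∘ (permIso σ))
      ((fderiv ℝ f (permIso σ y)).comp
        ((permIso σ).toContinuousLinearEquiv : _ →L[ℝ] _)) y :=
    (hdf (permIso σ y)).hasFDerivAt.comp y
      ((permIso σ).toContinuousLinearEquiv.hasFDerivAt)
  rw [hcomp, hy] at h1
  have h2 : fderiv ℝ f y = (fderiv ℝ f y).comp
      ((permIso σ).toContinuousLinearEquiv : _ →L[ℝ] _) := h1.fderiv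
  have key : ∀ w, ⟪gradient f y, w⟫ = fderiv ℝ f y w := fun w => by
    rw [gradient]; exact InnerProductSpace.toDual_symm_apply
  rw [key, key]
  nth_rewrite 2 [h2]
  simp

end aux

section aux2
variable {n : ℕ} (σ : Equiv.Perm (Fin n)) (x x' : EuclideanSpace ℝ (Fin n))
variable (hx : (WithLp.toLp 2 (fun i => x (σ⁻¹ i)) : EuclideanSpace ℝ (Fin n)) = x)
variable (hx' : (WithLp.toLp 2 (fun i => x' (σ⁻¹ i)) : EuclideanSpace ℝ (Fin n)) = x')
include hx hx'

lemma dirVec_image (T : Finset (Fin n)) :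
    dirVec x x' (T.image σ) = permIso σ (dirVec x x' T) := by
  ext i
  rw [permIso_apply]
  have hmem : i ∈ T.image σ ↔ σ⁻¹ i ∈ T := by
    constructor
    · intro h
      obtain ⟨j, hj, rfl⟩ := Finset.mem_image.mp h
      simpa using hj
    · intro h
      exact Finset.mem_image.mpr ⟨σ⁻¹ i, h, by simp⟩
  show (if i ∈ T.image σ then x i - x' i else 0) =
    (if σ⁻¹ i ∈ T then x (σ⁻¹ i) - x' (σ⁻¹ i) else 0)
  rw [show x (σ⁻¹ i) = x i from congrArg (fun v : EuclideanSpace ℝ (Fin n) => v i) hx,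
    show x' (σ⁻¹ i) = x' i from congrArg (fun v : EuclideanSpace ℝ (Fin n) => v i) hx']
  by_cases h : σ⁻¹ i ∈ T
  · rw [if_pos h, if_pos (hmem.mpr h)]
  · rw [if_neg h, if_neg (fun c => h (hmem.mp c))]

lemma unitDir_image (T : Finset (Fin n)) :
    unitDir x x' (T.image σ) = permIso σ (unitDir x x' T) := by
  classical
  rw [unitDir, unitDir, dirVec_image σ x x' hx hx' T]
  by_cases h : dirVec x x' T = 0
  · simp [h]
  · have h2 : permIso σ (dirVec x x' T) ≠ 0 := by
      simpa using h
    rw [if_neg h2, if_neg h]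
    simp [LinearIsometryEquiv.norm_map, _root_.map_smul]

lemma dirGrad_image (f : EuclideanSpace ℝ (Fin n) → ℝ) (hf : ContDiff ℝ 1 f)
    (hfσ : ∀ y : EuclideanSpace ℝ (Fin n),
        f (WithLp.toLp 2 (fun i => y (σ⁻¹ i)) : EuclideanSpace ℝ (Fin n)) = f y)
    (T : Finset (Fin n)) (y : EuclideanSpace ℝ (Fin n)) (hy : permIso σ y = y) :
    dirGrad f x x' (T.image σ) y = dirGrad f x x' T y := by
  rw [dirGrad, dirGrad, unitDir_image σ x x' hx hx',
    inner_grad_perm σ f hf hfσ y _ hy]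

end aux2

/-- **Symmetry-Preserving (Lemma 5).** If a permutation `σ` of the coordinates leaves `f`,
`x` and `x'` invariant and maps `I₁` bijectively onto `I₂`, then `a(I₁) = a(I₂)`. -/
theorem idgvis_symmetry {n : ℕ} (hn : 1 ≤ n)
    (f : EuclideanSpace ℝ (Fin n) → ℝ) (hf : ContDiff ℝ 1 f)
    (x x' : EuclideanSpace ℝ (Fin n)) (σ : Equiv.Perm (Fin n))
    (hfσ : ∀ y : EuclideanSpace ℝ (Fin n),
        f (WithLp.toLp 2 (fun i => y (σ⁻¹ i)) : EuclideanSpace ℝ (Fin n)) = f y)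
    (hx : (WithLp.toLp 2 (fun i => x (σ⁻¹ i)) : EuclideanSpace ℝ (Fin n)) = x)
    (hx' : (WithLp.toLp 2 (fun i => x' (σ⁻¹ i)) : EuclideanSpace ℝ (Fin n)) = x')
    (I₁ I₂ : Finset (Fin n)) (hI : I₁.image σ = I₂) :
    setAttr f x x' I₁ = setAttr f x x' I₂ := by
  subst hI
  have hgx : permIso σ x = x := by rw [permIso_apply]; exact hx
  have hgx' : permIso σ x' = x' := by rw [permIso_apply]; exact hx'
  have hpath : ∀ α : ℝ, permIso σ (x' + α • (x - x')) = x' + α • (x - x') := by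
    intro α
    rw [map_add, _root_.map_smul, map_sub, hgx, hgx']
  have hID : ∀ T : Finset (Fin n), IDGVis f x x' (T.image σ) = IDGVis f x x' T := by
    intro T
    unfold IDGVis
    congr 1
    funext α
    exact dirGrad_image σ x x' hx hx' f hf hfσ T _ (hpath α)
  unfold setAttr
  refine Finset.sum_nbij' (fun T => T.image σ) (fun T => T.image σ.symm) ?_ ?_ ?_ ?_ ?_
  · intro T hT
    exact Finset.mem_powerset.mpr
      (Finset.image_subset_image (Finset.mem_powerset.mp hT))
  · intro T hT
    have h1 : Finset.image (⇑σ.symm) (Finset.image (⇑σ) I₁) = I₁ := by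
      rw [Finset.image_image]
      simp [Function.comp]
    exact Finset.mem_powerset.mpr
      (h1 ▸ Finset.image_subset_image (Finset.mem_powerset.mp hT))
  · intro T hT
    simp [Finset.image_image, Function.comp]
  · intro T hT
    simp [Finset.image_image, Function.comp]
  · intro T hT
    exact (hID T).symm
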